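/- Let (E, (ℓ_k)_{k≥1}, ρ) be a negatively graded Lie ∞-algebroid over a commutative algebra O with no zero divisors acting on E_{−1}. Then the axioms ρ∘ℓ₁ = 0 on E_{−2} and ρ(ℓ₂(x,y)) = [ρ(x),ρ(y)] for x,y ∈ E_{−1} follow automatically from the higher Jacobi identities together with the Leibniz rule for ℓ₂ and O-multilinearity of ℓ_k for k ≠ 2. -/

import Mathlib

/-!
STATEMENT 5: For a negatively graded Lie ∞-algebroid over a commutative algebra `O` with no zero
divisors acting on `E_{-1}`, the axioms `ρ ∘ ℓ₁ = 0` on `E_{-2}` and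
`ρ(ℓ₂(x,y)) = [ρ(x), ρ(y)]` on `E_{-1}` follow from the higher Jacobi identities, the Leibniz
rule for `ℓ₂`, and `O`-multilinearity of `ℓ_k` for `k ≠ 2`.
The grading is internal: `grade n` is the component `E_{-(n+1)}` of degree `-(n+1)`.
-/

open Finset

/-- The Koszul sign `ε(σ; x₁,…,xₙ)` determined by degrees `d j` of the (graded symmetric)
arguments: a product of `(-1)^{d_a d_b}` over the inversions of `σ`. -/
def koszulSign {n : ℕ} (d : Fin n → ℕ) (σ : Equiv.Perm (Fin n)) : ℤ :=
  ∏ p ∈ Finset.univ.filter (fun p : Fin n × Fin n => p.1 < p.2 ∧ σ p.2 < σ p.1),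
    (-1 : ℤ) ^ (d (σ p.1) * d (σ p.2))

/-- `σ` is an `(i, n-i)`-shuffle: it is increasing on the first `i` and on the last `n - i`
positions. -/
def IsShuffle {n : ℕ} (i : ℕ) (σ : Equiv.Perm (Fin n)) : Prop :=
  (∀ a b : Fin n, a < b → (b : ℕ) < i → σ a < σ b) ∧
  (∀ a b : Fin n, a < b → i ≤ (a : ℕ) → σ a < σ b)

open Classical in
/-- The finite set of `(i, n-i)`-shuffles. -/
noncomputable def shuffles (n i : ℕ) : Finset (Equiv.Perm (Fin n)) :=
  Finset.univ.filter (fun σ => IsShuffle i σ)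

/-- The left-hand side of the `n`-th higher Jacobi identity for a family of graded symmetric
multibrackets `l`, evaluated on arguments `x` with `x j` of degree `-(g j + 1)`:
`∑_{i=1}^{n} ∑_{σ ∈ Sh(i,n-i)} ε(σ) ℓ_{n-i+1}(ℓ_i(x_{σ(1)},…,x_{σ(i)}), x_{σ(i+1)},…,x_{σ(n)})`. -/
noncomputable def jacobiator {K M : Type*} [Field K] [AddCommGroup M] [Module K M]
    (l : (k : ℕ) → MultilinearMap K (fun _ : Fin k => M) M)
    (n : ℕ) (g : Fin n → ℕ) (x : Fin n → M) : M :=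
  ∑ i : Fin n, ∑ σ ∈ shuffles n (i.1 + 1),
    koszulSign (fun j => g j + 1) σ •
      l (n - (i.1 + 1) + 1)
        (Fin.cons
          (l (i.1 + 1) (fun j : Fin (i.1 + 1) => x (σ (Fin.castLE i.isLt j))))
          (fun j : Fin (n - (i.1 + 1)) => x (σ ⟨i.1 + 1 + j.1, by have := j.isLt; omega⟩)))

/-- A negatively graded Lie ∞-algebroid over `O`: a negatively graded `O`-module with graded
symmetric `K`-multilinear brackets `ℓ_k` of degree `+1` satisfying the higher Jacobi identities,
an `O`-linear anchor `ρ : E_{-1} → Der(O)` (extended by zero in lower degrees),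
`O`-multilinearity of `ℓ_k` for `k ≠ 2`, and the Leibniz rule for `ℓ₂`.  (The axioms
`ρ ∘ ℓ₁ = 0` on `E_{-2}` and `ρ(ℓ₂(x,y)) = [ρ x, ρ y]` are *not* assumed.) -/
structure LieInftyAlgebroid (K O M : Type*) [Field K] [CharZero K] [CommRing O] [Algebra K O]
    [AddCommGroup M] [Module K M] [Module O M] [IsScalarTower K O M] where
  /-- `grade n` is the component `E_{-(n+1)}` of degree `-(n+1)`. -/
  grade : ℕ → Submodule O M
  internal : DirectSum.IsInternal grade
  /-- The `k`-ary brackets. -/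
  l : (k : ℕ) → MultilinearMap K (fun _ : Fin k => M) M
  /-- The anchor map. -/
  anchor : M →ₗ[O] Derivation K O O
  anchor_top : ∀ n, ∀ x ∈ grade (n + 1), anchor x = 0
  /-- Each `ℓ_k` has degree `+1`. -/
  l_deg : ∀ (k t : ℕ) (g : Fin k → ℕ) (x : Fin k → M), (∀ j, x j ∈ grade (g j)) →
      (∑ j, (g j + 1)) = t + 2 → l k x ∈ grade t
  l_bottom : ∀ x ∈ grade 0, l 1 ![x] = 0
  /-- The brackets are graded symmetric. -/
  l_symm : ∀ (k : ℕ) (g : Fin k → ℕ) (x : Fin k → M), (∀ j, x j ∈ grade (g j)) →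
      ∀ σ : Equiv.Perm (Fin k),
        l k (fun j => x (σ j)) = koszulSign (fun j => g j + 1) σ • l k x
  /-- For `k ≠ 2`, `ℓ_k` is `O`-multilinear. -/
  l_olin : ∀ (k : ℕ), k ≠ 2 → ∀ (x : Fin k → M) (j : Fin k) (f : O) (v : M),
      l k (Function.update x j (f • v)) = f • l k (Function.update x j v)
  /-- The Leibniz rule `ℓ₂(x, f y) = ρ(x)[f] y + f ℓ₂(x, y)`. -/
  leibniz : ∀ (x y : M) (f : O), l 2 ![x, f • y] = anchor x f • y + f • l 2 ![x, y]
  /-- The higher Jacobi identities. -/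
  jacobi : ∀ (n : ℕ) (g : Fin n → ℕ) (x : Fin n → M), (∀ j, x j ∈ grade (g j)) →
      jacobiator l n g x = 0

instance {n i : ℕ} : DecidablePred (IsShuffle (n := n) i) := fun _ => by
  unfold IsShuffle; infer_instance

lemma shuffles_eq (n i : ℕ) :
    shuffles n i = Finset.univ.filter (fun σ => IsShuffle i σ) := by
  unfold shuffles; exact Finset.filter_congr_decidable _ _ _

lemma shuffles21 : shuffles 2 1 = {1, Equiv.swap 0 1} := by rw [shuffles_eq]; decide
lemma shuffles22 : shuffles 2 2 = {1} := by rw [shuffles_eq]; decide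

lemma jacobiator_two {K M : Type*} [Field K] [AddCommGroup M] [Module K M]
    (l : (k : ℕ) → MultilinearMap K (fun _ : Fin k => M) M)
    (g : Fin 2 → ℕ) (x : Fin 2 → M) :
    jacobiator l 2 g x =
      (koszulSign (fun j => g j + 1) 1 • l 2 ![l 1 ![x 0], x 1]
      + koszulSign (fun j => g j + 1) (Equiv.swap 0 1) • l 2 ![l 1 ![x 1], x 0])
      + koszulSign (fun j => g j + 1) 1 • l 1 ![l 2 ![x 0, x 1]] := by
  have happ : ∀ (k : ℕ) (u v : Fin k → M), u = v → l k u = l k v := fun k u v h => by rw [h]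
  rw [jacobiator, Fin.sum_univ_two]
  congr 1
  · show ∑ σ ∈ shuffles 2 1,
        koszulSign (fun j => g j + 1) σ •
          l 2 (Fin.cons (l 1 (fun j : Fin 1 => x (σ (Fin.castLE (by omega) j))))
            (fun j : Fin 1 => x (σ ⟨1 + j.1, by omega⟩))) = _
    rw [shuffles21, Finset.sum_insert (by decide), Finset.sum_singleton]
    congr 1
    · refine congrArg₂ _ rfl (happ _ _ _ (funext fun j => ?_))
      refine Fin.cases ?_ (fun j => ?_) j <;>
        simp [Fin.fin_one_eq_zero] <;>
        exact happ _ _ _ (funext fun j => by simp [Fin.fin_one_eq_zero j])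
    · refine congrArg₂ _ rfl (happ _ _ _ (funext fun j => ?_))
      refine Fin.cases ?_ (fun j => ?_) j <;>
        simp [Fin.fin_one_eq_zero] <;>
        exact happ _ _ _ (funext fun j => by simp [Fin.fin_one_eq_zero j])
  · show ∑ σ ∈ shuffles 2 2,
        koszulSign (fun j => g j + 1) σ •
          l 1 (Fin.cons (l 2 (fun j : Fin 2 => x (σ (Fin.castLE (by omega) j))))
            (fun j : Fin 0 => x (σ ⟨2 + j.1, by omega⟩))) = _
    rw [shuffles22, Finset.sum_singleton]
    refine congrArg₂ _ rfl (happ _ _ _ (funext fun j => ?_))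
    refine Fin.cases ?_ (fun j => j.elim0) j
    simp only [Fin.cons_zero, Matrix.cons_val_zero]
    exact happ _ _ _ (funext fun j => by
      refine Fin.cases ?_ (fun j => ?_) j <;> simp [Fin.fin_one_eq_zero])

lemma shuffles32 : shuffles 3 2 = {1, Equiv.swap 1 2, finRotate 3} := by
  rw [shuffles_eq]; decide
lemma shuffles33 : shuffles 3 3 = {1} := by rw [shuffles_eq]; decide

lemma jacobiator_three {K M : Type*} [Field K] [AddCommGroup M] [Module K M]
    (l : (k : ℕ) → MultilinearMap K (fun _ : Fin k => M) M)
    (g : Fin 3 → ℕ) (x : Fin 3 → M) :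
    jacobiator l 3 g x =
      ((∑ σ ∈ shuffles 3 1,
        koszulSign (fun j => g j + 1) σ • l 3 ![l 1 ![x (σ 0)], x (σ 1), x (σ 2)])
      + (koszulSign (fun j => g j + 1) 1 • l 2 ![l 2 ![x 0, x 1], x 2]
       + (koszulSign (fun j => g j + 1) (Equiv.swap 1 2) • l 2 ![l 2 ![x 0, x 2], x 1]
       + koszulSign (fun j => g j + 1) (finRotate 3) • l 2 ![l 2 ![x 1, x 2], x 0])))
      + koszulSign (fun j => g j + 1) 1 • l 1 ![l 3 ![x 0, x 1, x 2]] := by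
  have happ : ∀ (k : ℕ) (u v : Fin k → M), u = v → l k u = l k v := fun k u v h => by rw [h]
  rw [jacobiator, Fin.sum_univ_three]
  congr 1
  congr 1
  · show ∑ σ ∈ shuffles 3 1,
        koszulSign (fun j => g j + 1) σ •
          l 3 (Fin.cons (l 1 (fun j : Fin 1 => x (σ (Fin.castLE (by omega) j))))
            (fun j : Fin 2 => x (σ ⟨1 + j.1, by omega⟩))) = _
    refine Finset.sum_congr rfl (fun σ _ => congrArg₂ _ rfl (happ _ _ _ (funext fun j => ?_)))
    refine Fin.cases ?_ (fun j => ?_) j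
    · simp only [Fin.cons_zero, Matrix.cons_val_zero]
      exact happ _ _ _ (funext fun j => by
        simp [Fin.fin_one_eq_zero j])
    · simp only [Fin.cons_succ]
      fin_cases j <;> rfl
  · show ∑ σ ∈ shuffles 3 2,
        koszulSign (fun j => g j + 1) σ •
          l 2 (Fin.cons (l 2 (fun j : Fin 2 => x (σ (Fin.castLE (by omega) j))))
            (fun j : Fin 1 => x (σ ⟨2 + j.1, by omega⟩))) = _
    rw [shuffles32, Finset.sum_insert (by decide), Finset.sum_insert (by decide),
      Finset.sum_singleton]
    congr 1
    rotate_left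
    congr 1
    all_goals
    · refine congrArg₂ _ rfl (happ _ _ _ (funext fun j => ?_))
      refine Fin.cases ?_ (fun j => ?_) j
      · simp only [Fin.cons_zero, Matrix.cons_val_zero]
        exact happ _ _ _ (funext fun j => by
          fin_cases j <;> exact congrArg x (by decide))
      · simp only [Fin.cons_succ]
        fin_cases j <;> exact congrArg x (by decide)
  · show ∑ σ ∈ shuffles 3 3,
        koszulSign (fun j => g j + 1) σ •
          l 1 (Fin.cons (l 3 (fun j : Fin 3 => x (σ (Fin.castLE (by omega) j))))
            (fun j : Fin 0 => x (σ ⟨3 + j.1, by omega⟩))) = _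
    rw [shuffles33, Finset.sum_singleton]
    refine congrArg₂ _ rfl (happ _ _ _ (funext fun j => ?_))
    refine Fin.cases ?_ (fun j => j.elim0) j
    simp only [Fin.cons_zero, Matrix.cons_val_zero]
    exact happ _ _ _ (funext fun j => by fin_cases j <;> exact congrArg x (by decide))

section Aux
variable {K O M : Type*} [Field K] [CharZero K] [CommRing O] [Algebra K O]
    [AddCommGroup M] [Module K M] [Module O M] [IsScalarTower K O M]
    (E : LieInftyAlgebroid K O M)

private lemma upd1 (q a : M) : Function.update ![q] 0 a = ![a] := by
  funext j; fin_cases j; simp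

private lemma upd20 (a b c : M) : Function.update ![a, b] 0 c = ![c, b] := by
  funext j; fin_cases j <;> simp

private lemma upd32 (a b c v : M) : Function.update ![a, b, c] 2 v = ![a, b, v] := by
  funext j; fin_cases j <;> simp

private lemma l_one_smul (f : O) (q : M) : E.l 1 ![f • q] = f • E.l 1 ![q] := by
  rw [← upd1 q (f • q), E.l_olin 1 (by decide), upd1]

private lemma l_three_smul (f : O) (a b c : M) :
    E.l 3 ![a, b, f • c] = f • E.l 3 ![a, b, c] := by
  rw [← upd32 a b c (f • c), E.l_olin 3 (by decide), upd32]

private lemma l2_add0 (a b c : M) :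
    E.l 2 ![a + b, c] = E.l 2 ![a, c] + E.l 2 ![b, c] := by
  have h := (E.l 2).map_update_add ![a, c] 0 a b
  rwa [upd20, upd20, upd20] at h

private lemma mem2 {a b : M} (ha : a ∈ E.grade 0) (hb : b ∈ E.grade 0) :
    E.l 2 ![a, b] ∈ E.grade 0 := by
  refine E.l_deg 2 0 ![0, 0] ![a, b] ?_ (by decide)
  intro j; fin_cases j <;> simpa

private lemma antisym {a b : M} (ha : a ∈ E.grade 0) (hb : b ∈ E.grade 0) :
    E.l 2 ![a, b] = - E.l 2 ![b, a] := by
  have h := E.l_symm 2 ![0, 0] ![b, a] (by intro j; fin_cases j <;> simpa) (Equiv.swap 0 1)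
  have h1 : (fun j => ![b, a] (Equiv.swap 0 1 j)) = ![a, b] := by
    funext j; fin_cases j <;> simp
  have h2 : koszulSign (fun j => (![0, 0] : Fin 2 → ℕ) j + 1) (Equiv.swap 0 1) = -1 := by decide
  rw [h1, h2] at h
  rw [h]; simp

private lemma leib0 {a b : M} (ha : a ∈ E.grade 0) (hb : b ∈ E.grade 0) (g : O) :
    E.l 2 ![g • a, b] = -(E.anchor b g • a) + g • E.l 2 ![a, b] := by
  rw [antisym E (Submodule.smul_mem _ g ha) hb, E.leibniz b a g,
    antisym E hb ha]
  module

private lemma jac2 {u v : M} (hu : u ∈ E.grade 1) (hv : v ∈ E.grade 0) :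
    E.l 2 ![E.l 1 ![u], v] + E.l 1 ![E.l 2 ![u, v]] = 0 := by
  have h := E.jacobi 2 ![1, 0] ![u, v] (by intro j; fin_cases j <;> simpa)
  rw [jacobiator_two] at h
  have s1 : koszulSign (fun j => (![1, 0] : Fin 2 → ℕ) j + 1) 1 = 1 := by decide
  have s2 : koszulSign (fun j => (![1, 0] : Fin 2 → ℕ) j + 1) (Equiv.swap 0 1) = 1 := by decide
  simp only [Matrix.cons_val_zero, Matrix.cons_val_one, Matrix.head_cons, s1, s2, one_smul] at h
  rw [E.l_bottom v hv,
    show E.l 2 ![(0 : M), u] = 0 from (E.l 2).map_coord_zero 0 (by simp), add_zero] at h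
  exact h

private lemma jac3 {x y z : M} (hx : x ∈ E.grade 0) (hy : y ∈ E.grade 0) (hz : z ∈ E.grade 0) :
    E.l 2 ![E.l 2 ![x, y], z] + (- E.l 2 ![E.l 2 ![x, z], y] + E.l 2 ![E.l 2 ![y, z], x])
      + E.l 1 ![E.l 3 ![x, y, z]] = 0 := by
  have hg : ∀ j, (![x, y, z] : Fin 3 → M) j ∈ E.grade 0 := by intro j; fin_cases j <;> simpa
  have h := E.jacobi 3 ![0, 0, 0] ![x, y, z] (by intro j; fin_cases j <;> simpa)
  rw [jacobiator_three] at h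
  have hS0 : (∑ σ ∈ shuffles 3 1,
      koszulSign (fun j => (![0,0,0] : Fin 3 → ℕ) j + 1) σ •
        E.l 3 ![E.l 1 ![![x,y,z] (σ 0)], ![x,y,z] (σ 1), ![x,y,z] (σ 2)]) = 0 := by
    refine Finset.sum_eq_zero (fun σ _ => ?_)
    rw [E.l_bottom _ (hg (σ 0)),
      show E.l 3 ![(0 : M), ![x,y,z] (σ 1), ![x,y,z] (σ 2)] = 0 from
        (E.l 3).map_coord_zero 0 (by simp), smul_zero]
  have s1 : koszulSign (fun j => (![0, 0, 0] : Fin 3 → ℕ) j + 1) 1 = 1 := by decide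
  have s2 : koszulSign (fun j => (![0, 0, 0] : Fin 3 → ℕ) j + 1) (Equiv.swap 1 2) = -1 := by decide
  have s3 : koszulSign (fun j => (![0, 0, 0] : Fin 3 → ℕ) j + 1) (finRotate 3) = 1 := by decide
  rw [hS0, s1, s2, s3] at h
  simp only [Matrix.cons_val_zero, Matrix.cons_val_one, Matrix.head_cons, one_smul,
    neg_one_zsmul, zero_add, Matrix.cons_val_two, Matrix.tail_cons] at h
  exact h

end Aux

/-- If `O` has no zero divisors on `E_{-1}`, then `ρ ∘ ℓ₁ = 0` on `E_{-2}` and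
`ρ(ℓ₂(x,y)) = [ρ(x), ρ(y)]` for `x, y ∈ E_{-1}` follow automatically. -/
theorem anchor_axioms_automatic
    {K O M : Type*} [Field K] [CharZero K] [CommRing O] [Algebra K O]
    [AddCommGroup M] [Module K M] [Module O M] [IsScalarTower K O M]
    (E : LieInftyAlgebroid K O M)
    (hnzd : ∀ (f : O) (e : M), e ∈ E.grade 0 → f • e = 0 → f = 0 ∨ e = 0) :
    (∀ x ∈ E.grade 1, E.anchor (E.l 1 ![x]) = 0) ∧
    (∀ x ∈ E.grade 0, ∀ y ∈ E.grade 0,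
      E.anchor (E.l 2 ![x, y]) = ⁅E.anchor x, E.anchor y⁆) := by
  constructor
  · intro u hu
    have hw : E.l 1 ![u] ∈ E.grade 0 :=
      E.l_deg 1 0 ![1] ![u] (by intro j; fin_cases j <;> simpa) (by decide)
    set w := E.l 1 ![u] with hwdef
    ext f
    have h1 := jac2 E hu (Submodule.smul_mem _ f hw)
    rw [E.leibniz w w f] at h1
    have h4 : E.l 2 ![u, f • w] = f • E.l 2 ![u, w] := by
      rw [E.leibniz u w f, E.anchor_top 0 u hu]; simp
    rw [h4, l_one_smul] at h1
    have h2 := jac2 E hu hw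
    have h3 := congrArg (f • ·) h2
    simp only [smul_add, smul_zero] at h3
    have h5 : E.anchor w f • w = 0 := by
      calc E.anchor w f • w
          = (E.anchor w f • w + f • E.l 2 ![w, w] + f • E.l 1 ![E.l 2 ![u, w]])
            - (f • E.l 2 ![w, w] + f • E.l 1 ![E.l 2 ![u, w]]) := by abel
        _ = 0 := by rw [h1, h3]; simp
    rcases hnzd (E.anchor w f) w hw h5 with h | h
    · simpa using h
    · rw [h]; simp
  · intro x hx y hy
    by_cases hx0 : x = 0
    · subst hx0
      rw [show E.l 2 ![(0:M), y] = 0 from (E.l 2).map_coord_zero 0 (by simp)]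
      simp
    · ext f
      rw [Derivation.commutator_apply]
      have hyx : E.l 2 ![y, x] = - E.l 2 ![x, y] := antisym E hy hx
      have hQ : E.l 2 ![x, x] = 0 := by
        have h := antisym E hx hx
        have h2 : (2 : K) • E.l 2 ![x, x] = 0 := by rw [two_smul]; nth_rewrite 1 [h]; abel
        simpa using (smul_eq_zero.mp h2).resolve_left two_ne_zero
      have hfx : f • x ∈ E.grade 0 := Submodule.smul_mem _ f hx
      have e1 : E.l 2 ![E.l 2 ![x, y], f • x]
          = E.anchor (E.l 2 ![x, y]) f • x + f • E.l 2 ![E.l 2 ![x, y], x] :=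
        E.leibniz _ x f
      have e2 : E.l 2 ![E.l 2 ![x, f • x], y]
          = -(E.anchor y (E.anchor x f) • x) + E.anchor x f • E.l 2 ![x, y] := by
        rw [show E.l 2 ![x, f • x] = E.anchor x f • x from by
          rw [E.leibniz, hQ, smul_zero, add_zero]]
        exact leib0 E hx hy (E.anchor x f)
      have e3 : E.l 2 ![E.l 2 ![y, f • x], x]
          = -(E.anchor x (E.anchor y f) • x) + (E.anchor x f • E.l 2 ![x, y]
            + f • E.l 2 ![E.l 2 ![y, x], x]) := by
        rw [E.leibniz y x f, l2_add0, leib0 E hx hx (E.anchor y f),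
          leib0 E (mem2 E hy hx) hx f, hQ, hyx]
        module
      have e4 : E.l 1 ![E.l 3 ![x, y, f • x]] = f • E.l 1 ![E.l 3 ![x, y, x]] := by
        rw [l_three_smul, l_one_smul]
      have j1 := jac3 E hx hy hfx
      rw [e1, e2, e3, e4] at j1
      have j2 := jac3 E hx hy hx
      rw [show E.l 2 ![E.l 2 ![x, x], y] = 0 from by
          rw [hQ]; exact (E.l 2).map_coord_zero 0 (by simp)] at j2
      rw [neg_zero, zero_add] at j2
      have key : (E.anchor (E.l 2 ![x, y]) f
          - (E.anchor x (E.anchor y f) - E.anchor y (E.anchor x f))) • x = 0 := by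
        linear_combination (norm := module) j1 - f • j2
      rcases hnzd _ x hx key with h | h
      · exact sub_eq_zero.mp h
      · exact absurd h hx0
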